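/- Let q > 0, let (x_j : j ∈ ℕ) be a q-separated sequence in ℝ^d, and let λ > 0. Then for every 1 ≤ p ≤ ∞ the infinite matrix (e^{−λ‖x_j−x_k‖₂²})_{j,k∈ℕ} acts as a bounded linear operator on ℓ_p(ℕ): there is a constant M (depending on d, λ, q) such that for every (c_k) ∈ ℓ_p, the sequence (Σ_k e^{−λ‖x_j−x_k‖₂²} c_k)_j lies in ℓ_p with norm at most M‖(c_k)‖_p. -/

import Mathlib

open MeasureTheory Filter Complex Metric
open scoped RealInnerProductSpace ENNReal NNReal Topology Pointwise

noncomputable section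

abbrev Rd (d : ℕ) := EuclideanSpace ℝ (Fin d)

/-- The exponential function `u ↦ e^{-i⟨x,u⟩}`. -/
def expF {d : ℕ} (x : Rd d) (u : Rd d) : ℂ :=
  Complex.exp (-(Complex.I * ((⟪x, u⟫ : ℝ) : ℂ)))

/-- `(x_j)` is a Riesz-basis sequence for `L₂(S)`: every `h ∈ L₂(S)` has a unique
representation `h = ∑_j a_j e^{-i⟨x_j,·⟩}` with `(a_j) ∈ ℓ₂`. -/
def IsRieszBasisSeq {d : ℕ} (S : Set (Rd d)) (x : ℕ → Rd d) : Prop :=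
  ∃ mem : ∀ j : ℕ, MemLp (expF (x j)) 2 (volume.restrict S),
    ∀ h : Lp ℂ 2 (volume.restrict S),
      ∃! a : lp (fun _ : ℕ => ℂ) 2,
        HasSum (fun j => (a j : ℂ) • ((mem j).toLp (expF (x j)))) h

/-- `f` belongs to `PW_S`, identified with its continuous representative, and `F` is its
Fourier transform (normalization `F[f](x) = ∫ f(u) e^{-i⟨x,u⟩} du`), characterized through the
Fourier inversion formula. -/
def IsPW {d : ℕ} (S : Set (Rd d)) (f : Rd d → ℂ) (F : Rd d → ℂ) : Prop :=
  MemLp f 2 volume ∧ MemLp F 2 volume ∧ (∀ u ∉ S, F u = 0) ∧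
    ∀ u : Rd d, f u = (((2 * Real.pi) ^ d : ℝ) : ℂ)⁻¹ *
      ∫ v in S, F v * Complex.exp (Complex.I * ((⟪v, u⟫ : ℝ) : ℂ))

/-- The Gaussian `g_λ(y) = e^{-λ‖y‖₂²}`, as a complex-valued function. -/
def gaussC {d : ℕ} (lam : ℝ) (y : Rd d) : ℂ := ((Real.exp (-lam * ‖y‖ ^ 2) : ℝ) : ℂ)

/-- `(x_j)` is `q`-separated. -/


lemma gauss_integrable (d : ℕ) {b : ℝ} (hb : 0 < b) :
    Integrable (fun u : Rd d => Real.exp (-b * ‖u‖ ^ 2)) := by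
  have h := (GaussianFourier.integrable_cexp_neg_mul_sq_norm_add (V := Rd d) (b := (b : ℂ))
    (by simpa using hb) 0 0).norm
  refine h.congr ?_
  filter_upwards with v
  simp [Complex.norm_exp]
  left
  norm_cast

lemma holder_tsum {P Q : ℝ} (hpq : P.HolderConjugate Q) (f g : ℕ → ℝ≥0∞) :
    ∑' k, f k * g k ≤ (∑' k, f k ^ P) ^ (1 / P) * (∑' k, g k ^ Q) ^ (1 / Q) := by
  have := ENNReal.lintegral_mul_le_Lp_mul_Lq (Measure.count : Measure ℕ) hpq
    (Measurable.of_discrete (f := f)).aemeasurable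
    (Measurable.of_discrete (f := g)).aemeasurable
  simpa [lintegral_count] using this

lemma schur_ennreal (A : ℕ → ℕ → ℝ≥0∞) (C : ℕ → ℝ≥0∞) (M : ℝ≥0∞) (P : ℝ)
    (hP : 1 ≤ P) (hM0 : M ≠ 0) (hMt : M ≠ ⊤)
    (hA0 : ∀ j k, A j k ≠ 0) (hAt : ∀ j k, A j k ≠ ⊤)
    (hrow : ∀ j, ∑' k, A j k ≤ M) (hcol : ∀ k, ∑' j, A j k ≤ M) :
    ∑' j, (∑' k, A j k * C k) ^ P ≤ M ^ P * ∑' k, C k ^ P := by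
  rcases eq_or_lt_of_le hP with h1 | h1
  · rw [← h1]
    simp only [ENNReal.rpow_one]
    calc ∑' j, ∑' k, A j k * C k = ∑' k, ∑' j, A j k * C k := ENNReal.tsum_comm
      _ = ∑' k, (∑' j, A j k) * C k := by
          refine tsum_congr fun k => ?_
          rw [ENNReal.tsum_mul_right]
      _ ≤ ∑' k, M * C k := ENNReal.tsum_le_tsum fun k => mul_le_mul_left (hcol k) _
      _ = M * ∑' k, C k := ENNReal.tsum_mul_left
  · set Q := P.conjExponent with hQdef
    have hpq : P.HolderConjugate Q := Real.HolderConjugate.conjExponent h1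
    have hpq' : Q.HolderConjugate P := hpq.symm
    have hP0 : 0 < P := hpq.pos
    have hQ0 : 0 < Q := hpq'.pos
    have hsum : 1 / Q + 1 / P = 1 := by simpa [one_div] using hpq'.inv_add_inv_eq_one
    have step1 : ∀ j, ∑' k, A j k * C k ≤
        M ^ (1 / Q) * (∑' k, A j k * C k ^ P) ^ (1 / P) := by
      intro j
      have e1 : ∀ k, A j k * C k = (A j k ^ (1 / Q)) * (A j k ^ (1 / P) * C k) := by
        intro k
        rw [← mul_assoc, ← ENNReal.rpow_add _ _ (hA0 j k) (hAt j k), hsum, ENNReal.rpow_one]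
      calc ∑' k, A j k * C k
          = ∑' k, (A j k ^ (1 / Q)) * (A j k ^ (1 / P) * C k) := tsum_congr e1
        _ ≤ (∑' k, (A j k ^ (1 / Q)) ^ Q) ^ (1 / Q) *
            (∑' k, (A j k ^ (1 / P) * C k) ^ P) ^ (1 / P) := holder_tsum hpq' _ _
        _ = (∑' k, A j k) ^ (1 / Q) * (∑' k, A j k * C k ^ P) ^ (1 / P) := by
            congr 2
            · refine tsum_congr fun k => ?_
              rw [← ENNReal.rpow_mul, one_div, inv_mul_cancel₀ hQ0.ne', ENNReal.rpow_one]
            · refine tsum_congr fun k => ?_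
              rw [ENNReal.mul_rpow_of_nonneg _ _ hP0.le, ← ENNReal.rpow_mul, one_div,
                inv_mul_cancel₀ hP0.ne', ENNReal.rpow_one]
        _ ≤ M ^ (1 / Q) * (∑' k, A j k * C k ^ P) ^ (1 / P) :=
            mul_le_mul_left (ENNReal.rpow_le_rpow (hrow j) (by positivity)) _
    have hPQ : 1 / Q * P = P - 1 := by
      have : 1 / Q = 1 - 1 / P := by linarith
      rw [this]
      field_simp
    have step2 : ∀ j, (∑' k, A j k * C k) ^ P ≤
        M ^ (P - 1) * ∑' k, A j k * C k ^ P := by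
      intro j
      calc (∑' k, A j k * C k) ^ P
          ≤ (M ^ (1 / Q) * (∑' k, A j k * C k ^ P) ^ (1 / P)) ^ P :=
            ENNReal.rpow_le_rpow (step1 j) hP0.le
        _ = M ^ (P - 1) * ∑' k, A j k * C k ^ P := by
            rw [ENNReal.mul_rpow_of_nonneg _ _ hP0.le, ← ENNReal.rpow_mul, hPQ,
              ← ENNReal.rpow_mul, one_div, inv_mul_cancel₀ hP0.ne', ENNReal.rpow_one]
    calc ∑' j, (∑' k, A j k * C k) ^ P
        ≤ ∑' j, M ^ (P - 1) * ∑' k, A j k * C k ^ P := ENNReal.tsum_le_tsum step2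
      _ = M ^ (P - 1) * ∑' j, ∑' k, A j k * C k ^ P := ENNReal.tsum_mul_left
      _ = M ^ (P - 1) * ∑' k, (∑' j, A j k) * C k ^ P := by
          rw [ENNReal.tsum_comm (f := fun j k => A j k * C k ^ P)]
          congr 1
          refine tsum_congr fun k => ?_
          rw [ENNReal.tsum_mul_right]
      _ ≤ M ^ (P - 1) * ∑' k, M * C k ^ P := by
          refine mul_le_mul_right (ENNReal.tsum_le_tsum fun k => ?_) _
          exact mul_le_mul_left (hcol k) _
      _ = M ^ P * ∑' k, C k ^ P := by
          rw [ENNReal.tsum_mul_left, ← mul_assoc]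
          congr 1
          nth_rewrite 2 [← ENNReal.rpow_one M]
          rw [← ENNReal.rpow_add _ _ hM0 hMt]
          ring_nf

lemma row_bound (d : ℕ) (q : ℝ) (hq : 0 < q) (x : ℕ → Rd d)
    (hsep : ∀ k l : ℕ, k ≠ l → q ≤ ‖x k - x l‖) (lam : ℝ) (hlam : 0 < lam) :
    ∃ M : ℝ, 1 ≤ M ∧ ∀ j, (Summable fun k => Real.exp (-lam * ‖x j - x k‖ ^ 2)) ∧
      ∑' k, Real.exp (-lam * ‖x j - x k‖ ^ 2) ≤ M := by
  set a := q / 2 with ha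
  have ha0 : 0 < a := by positivity
  set g : Rd d → ℝ := fun u => Real.exp (2 * lam * a ^ 2) *
    Real.exp (-(lam / 2) * ‖u‖ ^ 2) with hgdef
  have hgint : Integrable g := (gauss_integrable d (by positivity)).const_mul _
  have hgnonneg : ∀ u, 0 ≤ g u := fun u => by positivity
  set V := (volume (ball (0 : Rd d) a)).toReal with hV
  have hVpos : 0 < V := by
    refine ENNReal.toReal_pos (measure_ball_pos volume 0 ha0).ne' measure_ball_lt_top.ne
  set I := ∫ u, g u with hI
  have key : ∀ j (T : Finset ℕ), ∑ k ∈ T, Real.exp (-lam * ‖x j - x k‖ ^ 2) ≤ I / V := by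
    intro j T
    rw [le_div_iff₀ hVpos]
    have hpt : ∀ k, ∀ u ∈ ball (x k) a,
        Real.exp (-lam * ‖x j - x k‖ ^ 2) ≤ g (u - x j) := by
      intro k u hu
      have hd : ‖u - x k‖ < a := by
        simpa [dist_eq_norm] using mem_ball.mp hu
      set t := ‖x j - x k‖ with ht
      set s := ‖u - x j‖ with hs
      have ht0 : 0 ≤ t := norm_nonneg _
      have hs0 : 0 ≤ s := norm_nonneg _
      have hst : s ≤ t + a := by
        have : u - x j = (u - x k) + (x k - x j) := by abel
        calc s = ‖(u - x k) + (x k - x j)‖ := by rw [hs, this]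
          _ ≤ ‖u - x k‖ + ‖x k - x j‖ := norm_add_le _ _
          _ ≤ a + t := add_le_add hd.le (le_of_eq (norm_sub_rev _ _))
          _ = t + a := by ring
      rw [hgdef]
      simp only
      rw [← Real.exp_add, Real.exp_le_exp, ← hs]
      have h1 : s ^ 2 ≤ 2 * t ^ 2 + 4 * a ^ 2 := by nlinarith [sq_nonneg (t - a)]
      have h2 : lam * s ^ 2 ≤ lam * (2 * t ^ 2 + 4 * a ^ 2) :=
        mul_le_mul_of_nonneg_left h1 hlam.le
      linarith
    have hball : ∀ k, Real.exp (-lam * ‖x j - x k‖ ^ 2) * V ≤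
        ∫ u in ball (x k) a, g (u - x j) := by
      intro k
      have hVk : (volume (ball (x k) a)).toReal = V := by
        rw [hV, Measure.addHaar_ball_center]
      rw [← hVk]
      exact setIntegral_ge_of_const_le_real measurableSet_ball measure_ball_lt_top.ne
        (hpt k) ((hgint.comp_sub_right (x j)).integrableOn)
    have hdisj : (T : Set ℕ).Pairwise (Function.onFun Disjoint fun k => ball (x k) a) := by
      intro k _ l _ hkl
      refine ball_disjoint_ball ?_
      rw [dist_eq_norm]
      calc a + a = q := by rw [ha]; ring
        _ ≤ ‖x k - x l‖ := hsep k l hkl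
    calc (∑ k ∈ T, Real.exp (-lam * ‖x j - x k‖ ^ 2)) * V
        = ∑ k ∈ T, Real.exp (-lam * ‖x j - x k‖ ^ 2) * V := by rw [Finset.sum_mul]
      _ ≤ ∑ k ∈ T, ∫ u in ball (x k) a, g (u - x j) :=
          Finset.sum_le_sum fun k _ => hball k
      _ = ∫ u in ⋃ k ∈ T, ball (x k) a, g (u - x j) :=
          (integral_biUnion_finset T (fun k _ => measurableSet_ball) hdisj
            (fun k _ => (hgint.comp_sub_right (x j)).integrableOn)).symm
      _ ≤ ∫ u, g (u - x j) :=
          setIntegral_le_integral (hgint.comp_sub_right (x j))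
            (Filter.Eventually.of_forall fun u => hgnonneg _)
      _ = I := by rw [hI, integral_sub_right_eq_self g (x j)]
  refine ⟨max (I / V) 1, le_max_right _ _, fun j => ?_⟩
  have hnn : ∀ k, 0 ≤ Real.exp (-lam * ‖x j - x k‖ ^ 2) := fun k => (Real.exp_pos _).le
  have hsumm : Summable fun k => Real.exp (-lam * ‖x j - x k‖ ^ 2) :=
    summable_of_sum_le hnn (key j)
  exact ⟨hsumm, le_trans (Summable.tsum_le_of_sum_le hsumm (key j)) (le_max_left _ _)⟩
def Separated {d : ℕ} (q : ℝ) (x : ℕ → Rd d) : Prop :=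
  ∀ k l : ℕ, k ≠ l → q ≤ ‖x k - x l‖

/-- `Rb` is a Riesz-basis constant for the exponential system `(e^{-i⟨x_j,·⟩})` in `L₂(Z)`. -/
def HasRieszConst {d : ℕ} (Z : Set (Rd d)) (x : ℕ → Rd d) (Rb : ℝ) : Prop :=
  ∀ (T : Finset ℕ) (c : ℕ → ℂ),
    Rb⁻¹ * Real.sqrt (∑ j ∈ T, ‖c j‖ ^ 2) ≤
        Real.sqrt (∫ u in Z, ‖∑ j ∈ T, c j * expF (x j) u‖ ^ 2) ∧
      Real.sqrt (∫ u in Z, ‖∑ j ∈ T, c j * expF (x j) u‖ ^ 2) ≤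
        Rb * Real.sqrt (∑ j ∈ T, ‖c j‖ ^ 2)

/-- For a `q`-separated sequence and `λ > 0`, the Gaussian matrix
`(e^{-λ‖x_j-x_k‖²})_{j,k}` acts as a bounded operator on `ℓ_p` for all `1 ≤ p ≤ ∞`,
with norm bounded by a constant `M` depending only on `d`, `λ`, `q`. -/
theorem gaussian_matrix_bounded_on_lp (d : ℕ) (q : ℝ) (hq : 0 < q)
    (x : ℕ → Rd d) (hsep : Separated q x) (lam : ℝ) (hlam : 0 < lam) :
    ∃ M > 0, ∀ p : ℝ≥0∞, 1 ≤ p → ∀ c : lp (fun _ : ℕ => ℂ) p,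
      (∀ j, Summable fun k => gaussC lam (x j - x k) * c k) ∧
      ∃ h : Memℓp (fun j => ∑' k, gaussC lam (x j - x k) * c k) p,
        ‖(⟨_, h⟩ : lp (fun _ : ℕ => ℂ) p)‖ ≤ M * ‖c‖ := by
  
  obtain ⟨M, hM1, hMrow⟩ := row_bound d q hq x hsep lam hlam
  have hM0 : (0:ℝ) < M := lt_of_lt_of_le one_pos hM1
  refine ⟨M, hM0, fun p hp c => ?_⟩
  have hpne : p ≠ 0 := fun h => by simp [h] at hp
  have hck : ∀ k, ‖c k‖ ≤ ‖c‖ := fun k => lp.norm_apply_le_norm hpne c k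
  have hcnn : (0:ℝ) ≤ ‖c‖ := lp.norm_nonneg' c
  have hgcnorm : ∀ y : Rd d, ‖gaussC lam y‖ = Real.exp (-lam * ‖y‖ ^ 2) := by
    intro y
    rw [gaussC, Complex.norm_real]
    exact abs_of_pos (Real.exp_pos _)
  have hSsum : ∀ j, Summable fun k => Real.exp (-lam * ‖x j - x k‖ ^ 2) * ‖c k‖ := by
    intro j
    refine Summable.of_nonneg_of_le (fun k => by positivity) (fun k => ?_)
      ((hMrow j).1.mul_right ‖c‖)
    exact mul_le_mul_of_nonneg_left (hck k) (Real.exp_pos _).le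
  have heqn : ∀ j, (fun k => ‖gaussC lam (x j - x k) * c k‖)
      = fun k => Real.exp (-lam * ‖x j - x k‖ ^ 2) * ‖c k‖ := by
    intro j
    funext k
    rw [norm_mul, hgcnorm]
  have hsummable : ∀ j, Summable fun k => gaussC lam (x j - x k) * c k := by
    intro j
    refine Summable.of_norm ?_
    rw [heqn j]
    exact hSsum j
  refine ⟨hsummable, ?_⟩
  set f : ℕ → ℂ := fun j => ∑' k, gaussC lam (x j - x k) * c k with hfdef
  have hfle : ∀ j, ‖f j‖ ≤ ∑' k, Real.exp (-lam * ‖x j - x k‖ ^ 2) * ‖c k‖ := by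
    intro j
    have h1 : Summable fun k => ‖gaussC lam (x j - x k) * c k‖ := by
      rw [heqn j]; exact hSsum j
    have h2 := norm_tsum_le_tsum_norm h1
    rw [heqn j] at h2
    exact h2
  by_cases hptop : p = ∞
  · subst hptop
    have hb : ∀ j, ‖f j‖ ≤ M * ‖c‖ := by
      intro j
      refine (hfle j).trans ?_
      calc ∑' k, Real.exp (-lam * ‖x j - x k‖ ^ 2) * ‖c k‖
          ≤ ∑' k, Real.exp (-lam * ‖x j - x k‖ ^ 2) * ‖c‖ :=
            Summable.tsum_le_tsum (fun k => mul_le_mul_of_nonneg_left (hck k) (Real.exp_pos _).le)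
              (hSsum j) ((hMrow j).1.mul_right _)
        _ = (∑' k, Real.exp (-lam * ‖x j - x k‖ ^ 2)) * ‖c‖ := tsum_mul_right
        _ ≤ M * ‖c‖ := mul_le_mul_of_nonneg_right (hMrow j).2 hcnn
    have hmem : Memℓp f ∞ := memℓp_infty ⟨M * ‖c‖, by rintro y ⟨j, rfl⟩; exact hb j⟩
    exact ⟨hmem, lp.norm_le_of_forall_le (mul_nonneg hM0.le hcnn) hb⟩
  · have hP1 : 1 ≤ p.toReal := by
      rw [← ENNReal.toReal_one]
      exact ENNReal.toReal_mono hptop hp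
    have hP0 : 0 < p.toReal := lt_of_lt_of_le one_pos hP1
    set P := p.toReal with hPdef
    set A : ℕ → ℕ → ℝ≥0∞ := fun j k =>
      ENNReal.ofReal (Real.exp (-lam * ‖x j - x k‖ ^ 2)) with hA
    set C : ℕ → ℝ≥0∞ := fun k => (‖c k‖₊ : ℝ≥0∞) with hC
    have hA0 : ∀ j k, A j k ≠ 0 := fun j k => by
      simp [hA, ENNReal.ofReal_eq_zero, not_le, Real.exp_pos]
    have hAt : ∀ j k, A j k ≠ ⊤ := fun j k => ENNReal.ofReal_ne_top
    have hrowE : ∀ j, ∑' k, A j k ≤ ENNReal.ofReal M := by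
      intro j
      rw [hA, ← ENNReal.ofReal_tsum_of_nonneg (fun k => (Real.exp_pos _).le) (hMrow j).1]
      exact ENNReal.ofReal_le_ofReal (hMrow j).2
    have hcolE : ∀ k, ∑' j, A j k ≤ ENNReal.ofReal M := by
      intro k
      have e : ∀ j, A j k = ENNReal.ofReal (Real.exp (-lam * ‖x k - x j‖ ^ 2)) := by
        intro j
        rw [hA]
        simp only
        rw [norm_sub_rev]
      calc ∑' j, A j k
          = ∑' j, ENNReal.ofReal (Real.exp (-lam * ‖x k - x j‖ ^ 2)) := tsum_congr e
        _ ≤ ENNReal.ofReal M := by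
            rw [← ENNReal.ofReal_tsum_of_nonneg (fun j => (Real.exp_pos _).le) (hMrow k).1]
            exact ENNReal.ofReal_le_ofReal (hMrow k).2
    have hSub : ∀ j, (‖f j‖₊ : ℝ≥0∞) ≤ ∑' k, A j k * C k := by
      intro j
      have h1 : ENNReal.ofReal (∑' k, Real.exp (-lam * ‖x j - x k‖ ^ 2) * ‖c k‖)
          = ∑' k, A j k * C k := by
        rw [ENNReal.ofReal_tsum_of_nonneg (fun k => by positivity) (hSsum j)]
        refine tsum_congr fun k => ?_
        rw [ENNReal.ofReal_mul (Real.exp_pos _).le, ofReal_norm, enorm_eq_nnnorm]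
      rw [← h1, ← enorm_eq_nnnorm, ← ofReal_norm]
      exact ENNReal.ofReal_le_ofReal (hfle j)
    have hCP : ∑' k, C k ^ P = ENNReal.ofReal (‖c‖ ^ P) := by
      have hsumc : Summable fun k => ‖c k‖ ^ P := (lp.memℓp c).summable hP0
      rw [lp.norm_rpow_eq_tsum hP0 c,
        ENNReal.ofReal_tsum_of_nonneg (fun k => Real.rpow_nonneg (norm_nonneg _) _) hsumc]
      refine tsum_congr fun k => ?_
      rw [hC]
      simp only
      rw [← enorm_eq_nnnorm, ← ofReal_norm, ENNReal.ofReal_rpow_of_nonneg (norm_nonneg _) hP0.le]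
    have hmain : ∑' j, (‖f j‖₊ : ℝ≥0∞) ^ P ≤ ENNReal.ofReal ((M * ‖c‖) ^ P) := by
      calc ∑' j, (‖f j‖₊ : ℝ≥0∞) ^ P
          ≤ ∑' j, (∑' k, A j k * C k) ^ P :=
            ENNReal.tsum_le_tsum fun j => ENNReal.rpow_le_rpow (hSub j) hP0.le
        _ ≤ (ENNReal.ofReal M) ^ P * ∑' k, C k ^ P :=
            schur_ennreal A C _ P hP1 (by simp [ENNReal.ofReal_eq_zero, not_le, hM0])
              ENNReal.ofReal_ne_top hA0 hAt hrowE hcolE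
        _ = ENNReal.ofReal ((M * ‖c‖) ^ P) := by
            rw [hCP, ENNReal.ofReal_rpow_of_nonneg hM0.le hP0.le,
              ← ENNReal.ofReal_mul (Real.rpow_nonneg hM0.le _), ← Real.mul_rpow hM0.le hcnn]
    have hmain' : (∑' j, ((‖f j‖₊ ^ P : ℝ≥0) : ℝ≥0∞)) ≤ ENNReal.ofReal ((M * ‖c‖) ^ P) := by
      refine le_trans (le_of_eq (tsum_congr fun j => ?_)) hmain
      rw [ENNReal.coe_rpow_of_nonneg _ hP0.le]
    have hsum2 : Summable fun j => (‖f j‖₊ ^ P : ℝ≥0) :=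
      ENNReal.tsum_coe_ne_top_iff_summable.mp (ne_top_of_le_ne_top ENNReal.ofReal_ne_top hmain')
    have hsumR : Summable fun j => ‖f j‖ ^ P := by
      have h := NNReal.summable_coe.mpr hsum2
      refine h.congr fun j => ?_
      rw [NNReal.coe_rpow, coe_nnnorm]
    have hmem : Memℓp f p := memℓp_gen hsumR
    refine ⟨hmem, ?_⟩
    refine lp.norm_le_of_tsum_le hP0 (mul_nonneg hM0.le hcnn) ?_
    have hle : ∑' j, ‖f j‖ ^ P ≤ (M * ‖c‖) ^ P := by
      have h1 : (∑' j, ((‖f j‖₊ ^ P : ℝ≥0) : ℝ≥0∞)) = ((∑' j, (‖f j‖₊ ^ P : ℝ≥0) : ℝ≥0) : ℝ≥0∞) :=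
        (ENNReal.coe_tsum hsum2).symm
      have h2 := ENNReal.toReal_mono ENNReal.ofReal_ne_top hmain'
      rw [h1, ENNReal.coe_toReal, ENNReal.toReal_ofReal (Real.rpow_nonneg (mul_nonneg hM0.le hcnn) _)] at h2
      calc ∑' j, ‖f j‖ ^ P = ((∑' j, (‖f j‖₊ ^ P : ℝ≥0) : ℝ≥0) : ℝ) := by
            rw [NNReal.coe_tsum]
            refine tsum_congr fun j => ?_
            rw [NNReal.coe_rpow, coe_nnnorm]
        _ ≤ (M * ‖c‖) ^ P := h2
    exact hle
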